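/- Let G be a connected claw-free graph, and suppose G contains an induced path a−b−c−d where b and c both have degree 2 in G. If G has a perfect matching, then G has a perfect matching-cut. -/

import Mathlib

open SimpleGraph

section Upd
variable {V : Type*}

open Classical in
/-- Update an involution: pair `p` with `r`, freeing `s` (the old partner of `r`). -/
noncomputable def updA (f : V → V) (p r s : V) : V → V :=
  fun x => if x = p then r else if x = r then p else if x = s then s else f x

open Classical in
/-- Update an involution: break the pair `p, q` into two fixed points. -/
noncomputable def updB (f : V → V) (p q : V) : V → V :=
  fun x => if x = p then p else if x = q then q else f x

open Classical in
/-- Update an involution: pair up the two fixed points `p, q`. -/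
noncomputable def updC (f : V → V) (p q : V) : V → V :=
  fun x => if x = p then q else if x = q then p else f x

lemma updA_spec (f : V → V) {p r s : V} (hinv : ∀ x, f (f x) = x)
    (hp : f p = p) (hr : f r = s) (hpr : p ≠ r) (hps : p ≠ s) (hrs : r ≠ s) :
    (∀ x, updA f p r s (updA f p r s x) = x) ∧ updA f p r s p = r ∧
      updA f p r s r = p ∧ updA f p r s s = s ∧
      (∀ x, x ≠ p → x ≠ r → x ≠ s → updA f p r s x = f x) := by
  classical
  have hs : f s = r := by rw [← hr, hinv]
  have ep : updA f p r s p = r := by simp [updA]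
  have er : updA f p r s r = p := by simp [updA, if_neg hpr.symm]
  have es : updA f p r s s = s := by simp [updA, if_neg hps.symm, if_neg hrs.symm]
  have eg : ∀ x, x ≠ p → x ≠ r → x ≠ s → updA f p r s x = f x := by
    intro x h1 h2 h3; simp [updA, if_neg h1, if_neg h2, if_neg h3]
  refine ⟨?_, ep, er, es, eg⟩
  intro x
  by_cases h1 : x = p
  · rw [h1, ep, er]
  by_cases h2 : x = r
  · rw [h2, er, ep]
  by_cases h3 : x = s
  · rw [h3, es, es]
  have k1 : f x ≠ p := fun h => h1 (by rw [← hinv x, h, hp])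
  have k2 : f x ≠ r := fun h => h3 (by rw [← hinv x, h, hr])
  have k3 : f x ≠ s := fun h => h2 (by rw [← hinv x, h, hs])
  rw [eg x h1 h2 h3, eg _ k1 k2 k3, hinv]

lemma updB_spec (f : V → V) {p q : V} (hinv : ∀ x, f (f x) = x)
    (hpq : f p = q) (hne : p ≠ q) :
    (∀ x, updB f p q (updB f p q x) = x) ∧ updB f p q p = p ∧ updB f p q q = q ∧
      (∀ x, x ≠ p → x ≠ q → updB f p q x = f x) := by
  classical
  have hq : f q = p := by rw [← hpq, hinv]
  have ep : updB f p q p = p := by simp [updB]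
  have eq' : updB f p q q = q := by simp [updB, if_neg hne.symm]
  have eg : ∀ x, x ≠ p → x ≠ q → updB f p q x = f x := by
    intro x h1 h2; simp [updB, if_neg h1, if_neg h2]
  refine ⟨?_, ep, eq', eg⟩
  intro x
  by_cases h1 : x = p
  · rw [h1, ep, ep]
  by_cases h2 : x = q
  · rw [h2, eq', eq']
  have k1 : f x ≠ p := fun h => h2 (by rw [← hinv x, h, hpq])
  have k2 : f x ≠ q := fun h => h1 (by rw [← hinv x, h, hq])
  rw [eg x h1 h2, eg _ k1 k2, hinv]

lemma updC_spec (f : V → V) {p q : V} (hinv : ∀ x, f (f x) = x)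
    (hp : f p = p) (hq : f q = q) (hne : p ≠ q) :
    (∀ x, updC f p q (updC f p q x) = x) ∧ updC f p q p = q ∧ updC f p q q = p ∧
      (∀ x, x ≠ p → x ≠ q → updC f p q x = f x) := by
  classical
  have ep : updC f p q p = q := by simp [updC]
  have eq' : updC f p q q = p := by simp [updC, if_neg hne.symm]
  have eg : ∀ x, x ≠ p → x ≠ q → updC f p q x = f x := by
    intro x h1 h2; simp [updC, if_neg h1, if_neg h2]
  refine ⟨?_, ep, eq', eg⟩
  intro x
  by_cases h1 : x = p
  · rw [h1, ep, eq']
  by_cases h2 : x = q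
  · rw [h2, eq', ep]
  have k1 : f x ≠ p := fun h => h1 (by rw [← hinv x, h, hp])
  have k2 : f x ≠ q := fun h => h2 (by rw [← hinv x, h, hq])
  rw [eg x h1 h2, eg _ k1 k2, hinv]

end Upd

/-- Augmenting-path lemma (Las Vergnas / Sumner style): in a claw-free graph, a
near-perfect "matching function" `f` missing exactly the two reachable vertices
`u, v` can be improved to a perfect one. Strong induction on `dist u v`. -/
lemma clawfree_augment {V : Type*} (H : SimpleGraph V)
    (hclaw : ∀ v x y z : V, x ≠ y → x ≠ z → y ≠ z →
      H.Adj v x → H.Adj v y → H.Adj v z → H.Adj x y ∨ H.Adj x z ∨ H.Adj y z) :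
    ∀ (n : ℕ) (u v : V) (f : V → V), u ≠ v → H.Reachable u v → H.dist u v ≤ n →
      (∀ x, f (f x) = x) → f u = u → f v = v →
      (∀ x, x ≠ u → x ≠ v → f x ≠ x ∧ H.Adj x (f x)) →
      ∃ g : V → V, (∀ x, g (g x) = x) ∧ (∀ x, g x ≠ x ∧ H.Adj x (g x)) := by
  classical
  intro n
  induction n with
  | zero =>
    intro u v f huv hr hd _ _ _ _
    exact absurd (hr.dist_eq_zero_iff.mp (Nat.le_zero.mp hd)) huv
  | succ n ih =>
    intro u v f huv hr hd hinv hfu hfv hm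
    by_cases hadj : H.Adj u v
    · -- pair up u and v
      obtain ⟨ginv, gu, gv, gg⟩ := updC_spec f hinv hfu hfv huv
      refine ⟨updC f u v, ginv, ?_⟩
      intro x
      by_cases h1 : x = u
      · rw [h1, gu]; exact ⟨huv.symm, hadj⟩
      by_cases h2 : x = v
      · rw [h2, gv]; exact ⟨huv, hadj.symm⟩
      · rw [gg x h1 h2]; exact hm x h1 h2
    · obtain ⟨p, hp⟩ := hr.exists_walk_length_eq_dist
      cases p with
      | nil => exact absurd rfl huv
      | @cons _ x1 _ h1 p' =>
        cases p' with
        | nil => exact absurd h1 hadj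
        | @cons _ x2 _ h2 q =>
          simp only [Walk.length_cons] at hp
          have hx1u : x1 ≠ u := h1.ne'
          have hx1v : x1 ≠ v := by rintro rfl; exact hadj h1
          have hux2 : u ≠ x2 := by
            rintro rfl
            have := H.dist_le q
            omega
          have hnux2 : ¬ H.Adj u x2 := by
            intro h
            have := H.dist_le (Walk.cons h q)
            simp only [Walk.length_cons] at this
            omega
          obtain ⟨hyx1, hx1y⟩ := hm x1 hx1u hx1v
          have hfy : f (f x1) = x1 := hinv x1
          have hyu : f x1 ≠ u := fun h => hx1u (by rw [← hfy, h, hfu])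
          have hyv : f x1 ≠ v := fun h => hx1v (by rw [← hfy, h, hfv])
          have hA : f x1 = x2 ∨ H.Adj u (f x1) ∨ H.Adj x2 (f x1) := by
            by_cases hyx2 : f x1 = x2
            · exact Or.inl hyx2
            · rcases hclaw x1 u x2 (f x1) hux2 hyu.symm (Ne.symm hyx2)
                h1.symm h2 hx1y with h | h | h
              · exact absurd h hnux2
              · exact Or.inr (Or.inl h)
              · exact Or.inr (Or.inr h)
          rcases hA with hA | hA | hA
          · -- f x1 = x2 : pair u with x1, expose x2 (= f x1) and v
            obtain ⟨ginv, gu, gx1, gy, gg⟩ :=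
              updA_spec f hinv hfu (rfl : f x1 = f x1) hx1u.symm hyu.symm hyx1.symm
            subst hA
            refine ih (f x1) v (updA f u x1 (f x1)) hyv q.reachable
              (le_trans (H.dist_le q) (by omega)) ginv gy
              (gg v (Ne.symm huv) (Ne.symm hx1v) hyv.symm ▸ hfv) ?_
            intro x hxy hxv
            by_cases hxu : x = u
            · rw [hxu, gu]; exact ⟨hx1u, h1⟩
            by_cases hxx1 : x = x1
            · rw [hxx1, gx1]; exact ⟨hx1u.symm, h1.symm⟩
            · rw [gg x hxu hxx1 hxy]; exact hm x hxu hxv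
          · -- u ~ f x1 : pair u with f x1, expose x1 and v
            obtain ⟨ginv, gu, gy, gx1, gg⟩ :=
              updA_spec f hinv hfu hfy hyu.symm hx1u.symm hyx1
            refine ih x1 v (updA f u (f x1) x1) hx1v (Walk.cons h2 q).reachable
              (le_trans (H.dist_le (Walk.cons h2 q))
                (by simp only [Walk.length_cons]; omega)) ginv gx1
              (gg v (Ne.symm huv) hyv.symm (Ne.symm hx1v) ▸ hfv) ?_
            intro x hxx1 hxv
            by_cases hxu : x = u
            · rw [hxu, gu]; exact ⟨hyu, hA⟩
            by_cases hxy : x = f x1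
            · rw [hxy, gy]; exact ⟨hyu.symm, hA.symm⟩
            · rw [gg x hxu hxy hxx1]; exact hm x hxu hxv
          · -- x2 ~ f x1 : pair u with x1, expose f x1 and v
            obtain ⟨ginv, gu, gx1, gy, gg⟩ :=
              updA_spec f hinv hfu (rfl : f x1 = f x1) hx1u.symm hyu.symm hyx1.symm
            refine ih (f x1) v (updA f u x1 (f x1)) hyv (Walk.cons hA.symm q).reachable
              (le_trans (H.dist_le (Walk.cons hA.symm q))
                (by simp only [Walk.length_cons]; omega)) ginv gy
              (gg v (Ne.symm huv) (Ne.symm hx1v) hyv.symm ▸ hfv) ?_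
            intro x hxy hxv
            by_cases hxu : x = u
            · rw [hxu, gu]; exact ⟨hx1u, h1⟩
            by_cases hxx1 : x = x1
            · rw [hxx1, gx1]; exact ⟨hx1u.symm, h1.symm⟩
            · rw [gg x hxu hxx1 hxy]; exact hm x hxu hxv

/-- If a perfect matching contains edges `ba` and `cd`, where the neighbourhoods of
`b` and `c` are `{a,c}` and `{b,d}` respectively, then removing the matching edges
disconnects the graph (the component `{b, c}` splits off). -/
lemma matching_disconnects {V : Type*} (G : SimpleGraph V) {a b c d : V}
    (Nb : ∀ x, G.Adj b x → x = a ∨ x = c) (Nc : ∀ x, G.Adj c x → x = b ∨ x = d)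
    (hab : a ≠ b) (hac : a ≠ c)
    (M : G.Subgraph) (hba : M.Adj b a) (hcd : M.Adj c d) :
    ¬ (G.deleteEdges M.edgeSet).Connected := by
  intro h
  have claim : ∀ x y, (G.deleteEdges M.edgeSet).Walk x y →
      (x = b ∨ x = c) → (y = b ∨ y = c) := by
    intro x y w
    induction w with
    | nil => exact id
    | @cons x z y hxz p ih =>
      intro hx
      rw [deleteEdges_adj] at hxz
      obtain ⟨hG, hnM⟩ := hxz
      apply ih
      rcases hx with rfl | rfl
      · rcases Nb z hG with rfl | rfl
        · exact absurd (Subgraph.mem_edgeSet.mpr hba) hnM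
        · exact Or.inr rfl
      · rcases Nc z hG with rfl | rfl
        · exact Or.inl rfl
        · exact absurd (Subgraph.mem_edgeSet.mpr hcd) hnM
  obtain ⟨w⟩ := h.preconnected b a
  rcases claim b a w (Or.inl rfl) with rfl | rfl
  · exact hab rfl
  · exact hac rfl

/-- A connected claw-free graph with an induced path `a-b-c-d` where `b, c` have degree 2,
possessing a perfect matching, has a perfect matching-cut. -/
theorem clawfree_induced_path_perfectMatchingCut {V : Type*} [Fintype V]
    (G : SimpleGraph V) [DecidableRel G.Adj] (hG : G.Connected)
    (hclaw : ∀ v a b c : V, a ≠ b → a ≠ c → b ≠ c →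
      G.Adj v a → G.Adj v b → G.Adj v c → G.Adj a b ∨ G.Adj a c ∨ G.Adj b c)
    (a b c d : V) (hac : a ≠ c) (had : a ≠ d) (hbd : b ≠ d)
    (hab : G.Adj a b) (hbc : G.Adj b c) (hcd : G.Adj c d)
    (hnac : ¬ G.Adj a c) (hnad : ¬ G.Adj a d) (hnbd : ¬ G.Adj b d)
    (hdb : G.degree b = 2) (hdc : G.degree c = 2)
    (hpm : ∃ M : G.Subgraph, M.IsPerfectMatching) :
    ∃ M : G.Subgraph, M.IsPerfectMatching ∧ ¬ (G.deleteEdges M.edgeSet).Connected := by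
  classical
  obtain ⟨M, hM⟩ := hpm
  -- neighbourhood facts from the degree hypotheses
  have Nb : ∀ x, G.Adj b x → x = a ∨ x = c := by
    have hsub : ({a, c} : Finset V) ⊆ G.neighborFinset b := by
      intro x hx
      simp only [Finset.mem_insert, Finset.mem_singleton] at hx
      rcases hx with rfl | rfl
      · exact (mem_neighborFinset G b x).mpr hab.symm
      · exact (mem_neighborFinset G b x).mpr hbc
    have heq : G.neighborFinset b = {a, c} :=
      (Finset.eq_of_subset_of_card_le hsub (by
        rw [card_neighborFinset_eq_degree, hdb, Finset.card_pair hac])).symm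
    intro x hx
    have hmem : x ∈ G.neighborFinset b := (mem_neighborFinset G b x).mpr hx
    rw [heq] at hmem
    simpa using hmem
  have Nc : ∀ x, G.Adj c x → x = b ∨ x = d := by
    have hsub : ({b, d} : Finset V) ⊆ G.neighborFinset c := by
      intro x hx
      simp only [Finset.mem_insert, Finset.mem_singleton] at hx
      rcases hx with rfl | rfl
      · exact (mem_neighborFinset G c x).mpr hbc.symm
      · exact (mem_neighborFinset G c x).mpr hcd
    have heq : G.neighborFinset c = {b, d} :=
      (Finset.eq_of_subset_of_card_le hsub (by
        rw [card_neighborFinset_eq_degree, hdc, Finset.card_pair hbd])).symm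
    intro x hx
    have hmem : x ∈ G.neighborFinset c := (mem_neighborFinset G c x).mpr hx
    rw [heq] at hmem
    simpa using hmem
  by_cases hMbc : M.Adj b c
  · -- the given matching contains bc
    set H : SimpleGraph V := G.deleteEdges {s(b, c)} with hH
    by_cases hHconn : H.Connected
    · -- H connected: find a perfect matching avoiding bc via the augmenting lemma
      have hf : ∀ v : V, ∃! w, M.Adj v w := fun v => hM.1 (hM.2 v)
      set f : V → V := fun v => (hf v).exists.choose with hfdef
      have hfadj : ∀ v, M.Adj v (f v) := fun v => (hf v).exists.choose_spec
      have hfuniq : ∀ v w, M.Adj v w → f v = w := fun v w hw =>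
        ((hf v).unique (hfadj v) hw)
      have hfinv : ∀ v, f (f v) = v := fun v => hfuniq (f v) v (hfadj v).symm
      have hfb : f b = c := hfuniq b c hMbc
      have hfne : ∀ v, f v ≠ v := fun v h => G.loopless.irrefl v (by have h2 := (hfadj v).adj_sub; rwa [h] at h2)
      -- no vertex of H is adjacent to both b and c
      have hH2 : ∀ v, H.Adj v b → H.Adj v c → False := by
        intro v hvb hvc
        rw [hH, deleteEdges_adj] at hvb hvc
        have h1 : v = a := by
          rcases Nb v hvb.1.symm with rfl | rfl
          · rfl
          · exact absurd (by rw [Sym2.eq_swap]; rfl) hvb.2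
        have h2 : v = d := by
          rcases Nc v hvc.1.symm with rfl | rfl
          · exact absurd rfl hvc.2
          · rfl
        exact had (h1 ▸ h2)
      -- H is claw-free
      have hclawH : ∀ v x y z : V, x ≠ y → x ≠ z → y ≠ z →
          H.Adj v x → H.Adj v y → H.Adj v z → H.Adj x y ∨ H.Adj x z ∨ H.Adj y z := by
        intro v x y z hxy hxz hyz hvx hvy hvz
        have toH : ∀ {p q : V}, G.Adj p q → H.Adj v p → H.Adj v q → H.Adj p q := by
          intro p q hpq hvp hvq
          rw [hH, deleteEdges_adj]
          refine ⟨hpq, ?_⟩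
          intro hmem
          rw [Set.mem_singleton_iff, Sym2.eq_iff] at hmem
          rcases hmem with ⟨rfl, rfl⟩ | ⟨rfl, rfl⟩
          · exact hH2 v hvp hvq
          · exact hH2 v hvq hvp
        rcases hclaw v x y z hxy hxz hyz ((deleteEdges_le _) hvx)
            ((deleteEdges_le _) hvy) ((deleteEdges_le _) hvz) with h | h | h
        · exact Or.inl (toH h hvx hvy)
        · exact Or.inr (Or.inl (toH h hvx hvz))
        · exact Or.inr (Or.inr (toH h hvy hvz))
      have hbc' : b ≠ c := hbc.ne
      obtain ⟨f'inv, f'b, f'c, f'g⟩ := updB_spec f hfinv hfb hbc'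
      have hf'm : ∀ x, x ≠ b → x ≠ c → updB f b c x ≠ x ∧ H.Adj x (updB f b c x) := by
        intro x hxb hxc
        rw [f'g x hxb hxc]
        refine ⟨hfne x, ?_⟩
        rw [hH, deleteEdges_adj]
        refine ⟨(hfadj x).adj_sub, ?_⟩
        intro hmem
        rw [Set.mem_singleton_iff, Sym2.eq_iff] at hmem
        rcases hmem with ⟨rfl, _⟩ | ⟨rfl, _⟩
        · exact hxb rfl
        · exact hxc rfl
      obtain ⟨g, hginv, hgm⟩ := clawfree_augment H hclawH (H.dist b c) b c
        (updB f b c) hbc' (hHconn.preconnected b c) le_rfl f'inv f'b f'c hf'm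
      -- build the perfect matching subgraph from g
      set M' : G.Subgraph :=
        { verts := Set.univ
          Adj := fun x y => H.Adj x y ∧ g x = y
          adj_sub := fun h => (deleteEdges_le _) h.1
          edge_vert := fun _ => Set.mem_univ _
          symm := Std.Symm.mk <| by
            rintro x y ⟨h, e⟩
            exact ⟨h.symm, by rw [← e, hginv]⟩ } with hM'def
      have hM'pm : M'.IsPerfectMatching := by
        constructor
        · intro v _
          exact ⟨g v, ⟨(hgm v).2, rfl⟩, fun w hw => hw.2.symm⟩
        · intro v; exact Set.mem_univ v
      have hHba : ∀ x, H.Adj b x → x = a := by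
        intro x hx
        rw [hH, deleteEdges_adj] at hx
        rcases Nb x hx.1 with rfl | rfl
        · rfl
        · exact absurd rfl hx.2
      have hHcd : ∀ x, H.Adj c x → x = d := by
        intro x hx
        rw [hH, deleteEdges_adj] at hx
        rcases Nc x hx.1 with rfl | rfl
        · exact absurd (by rw [Sym2.eq_swap]; rfl) hx.2
        · rfl
      have hgb : g b = a := hHba _ (hgm b).2
      have hgc : g c = d := hHcd _ (hgm c).2
      have hM'ba : M'.Adj b a := ⟨hgb ▸ (hgm b).2, hgb⟩
      have hM'cd : M'.Adj c d := ⟨hgc ▸ (hgm c).2, hgc⟩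
      exact ⟨M', hM'pm, matching_disconnects G Nb Nc hab.ne hac M' hM'ba hM'cd⟩
    · -- H disconnected: M itself is a matching-cut
      refine ⟨M, hM, ?_⟩
      intro hcon
      apply hHconn
      apply hcon.mono
      intro x y hxy
      rw [deleteEdges_adj] at hxy
      rw [hH, deleteEdges_adj]
      refine ⟨hxy.1, ?_⟩
      intro hmem
      rw [Set.mem_singleton_iff] at hmem
      exact hxy.2 (hmem ▸ Subgraph.mem_edgeSet.mpr hMbc)
  · -- the matching avoids bc: it must contain ab and cd, hence is a matching-cut
    obtain ⟨wb, hwb, -⟩ := hM.1 (hM.2 b)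
    obtain ⟨wc, hwc, -⟩ := hM.1 (hM.2 c)
    have hba : M.Adj b a := by
      rcases Nb wb hwb.adj_sub with rfl | rfl
      · exact hwb
      · exact absurd hwb hMbc
    have hcd' : M.Adj c d := by
      rcases Nc wc hwc.adj_sub with rfl | rfl
      · exact absurd hwc.symm hMbc
      · exact hwc
    exact ⟨M, hM, matching_disconnects G Nb Nc hab.ne hac M hba hcd'⟩
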